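/- Let A_1,…,A_n be complex square matrices and p ≥ 2. Then ‖∑_{i=1}^n A_i‖_p^p + ∑_{1≤i<j≤n} ‖A_i − A_j‖_p^p ≤ n^(p-1)·∑_{i=1}^n ‖A_i‖_p^p. -/

import Mathlib

open scoped ComplexOrder

/-- The Schatten `p`-(quasi)norm of a square complex matrix:
`‖X‖_p = (tr |X|^p)^(1/p)`, computed as `(∑ i, λ_i(Xᴴ * X) ^ (p/2)) ^ (1/p)`,
where `λ_i(Xᴴ * X)` are the (nonnegative) eigenvalues of `Xᴴ * X`, whose square
roots are the singular values of `X`. -/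
noncomputable def schattenNorm {m : Type*} [Fintype m] [DecidableEq m]
    (p : ℝ) (X : Matrix m m ℂ) : ℝ :=
  (∑ i, ((Matrix.posSemidef_conjTranspose_mul_self X).1.eigenvalues i ^ (p / 2))) ^ (1 / p)

namespace HKProof

open Matrix Polynomial Finset

variable {k : Type*} [Fintype k] [DecidableEq k]

/-- Trace of the `q`-th power of a Hermitian matrix, via eigenvalues. -/
noncomputable def trf (q : ℝ) {Q : Matrix k k ℂ} (hQ : Q.IsHermitian) : ℝ :=
  ∑ i, hQ.eigenvalues i ^ q

lemma trf_nonneg {q : ℝ} {Q : Matrix k k ℂ} (hQ : Q.PosSemidef) : 0 ≤ trf q hQ.1 :=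
  Finset.sum_nonneg fun i _ => Real.rpow_nonneg (hQ.eigenvalues_nonneg i) q

lemma trf_congr {A B : Matrix k k ℂ} (h : A = B) (hA : A.IsHermitian) (hB : B.IsHermitian)
    (q : ℝ) : trf q hA = trf q hB := by subst h; rfl

lemma jensen_rpow {ι : Type*} [Fintype ι] (w z : ι → ℝ) (hw : ∀ i, 0 ≤ w i)
    (hw' : ∑ i, w i = 1) (hz : ∀ i, 0 ≤ z i) {q : ℝ} (hq : 1 ≤ q) :
    (∑ i, w i * z i) ^ q ≤ ∑ i, w i * z i ^ q :=
  Real.rpow_arith_mean_le_arith_mean_rpow Finset.univ w z (fun i _ => hw i) hw'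
    (fun i _ => hz i) hq

lemma rpow_sum_le_card_mul {ι : Type*} [Fintype ι] (a : ι → ℝ) (ha : ∀ i, 0 ≤ a i)
    {q : ℝ} (hq : 1 ≤ q) :
    (∑ i, a i) ^ q ≤ (Fintype.card ι : ℝ) ^ (q - 1) * ∑ i, a i ^ q := by
  cases isEmpty_or_nonempty ι
  · simp [Real.zero_rpow (by linarith : q ≠ 0)]
  · set c : ℝ := (Fintype.card ι : ℝ) with hc
    have hN : (0:ℝ) < c := by
      simp only [hc, Nat.cast_pos]; exact Fintype.card_pos
    have hw' : ∑ _i : ι, c⁻¹ = 1 := by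
      simp [Finset.sum_const, hc]
    have hS : 0 ≤ ∑ i, a i := Finset.sum_nonneg fun i _ => ha i
    have h := jensen_rpow (fun _ => c⁻¹) a (fun _ => by positivity) hw' ha hq
    have e1 : ∑ i, c⁻¹ * a i = c⁻¹ * ∑ i, a i := by rw [Finset.mul_sum]
    have e2 : ∑ i, c⁻¹ * a i ^ q = c⁻¹ * ∑ i, a i ^ q := by rw [Finset.mul_sum]
    rw [e1, e2, Real.mul_rpow (by positivity) hS] at h
    have h2 : c ^ q * (c⁻¹ ^ q * (∑ i, a i) ^ q) ≤ c ^ q * (c⁻¹ * ∑ i, a i ^ q) := by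
      apply mul_le_mul_of_nonneg_left h (Real.rpow_nonneg hN.le q)
    have e3 : c ^ q * (c⁻¹ ^ q * (∑ i, a i) ^ q) = (∑ i, a i) ^ q := by
      rw [← mul_assoc, ← Real.mul_rpow hN.le (by positivity), mul_inv_cancel₀ hN.ne',
        Real.one_rpow, one_mul]
    have e4 : c ^ q * (c⁻¹ * ∑ i, a i ^ q) = c ^ (q - 1) * ∑ i, a i ^ q := by
      rw [Real.rpow_sub hN, Real.rpow_one, div_eq_mul_inv]; ring
    rw [e3, e4] at h2
    exact h2

lemma key_scalar {β γ : Type*} [Fintype β] [Fintype γ] (w : β → γ → ℝ) (z : β → ℝ)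
    (hw : ∀ b c, 0 ≤ w b c) (hcol : ∀ c, ∑ b, w b c = 1) (hrow : ∀ b, ∑ c, w b c = 1)
    (hz : ∀ b, 0 ≤ z b) {q : ℝ} (hq : 1 ≤ q) :
    ∑ c, (∑ b, w b c * z b) ^ q ≤ ∑ b, z b ^ q := by
  calc ∑ c, (∑ b, w b c * z b) ^ q
      ≤ ∑ c, ∑ b, w b c * z b ^ q :=
        Finset.sum_le_sum fun c _ => jensen_rpow (fun b => w b c) z (fun b => hw b c)
          (hcol c) hz hq
    _ = ∑ b, (∑ c, w b c) * z b ^ q := by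
        rw [Finset.sum_comm]
        exact Finset.sum_congr rfl fun b _ => by rw [Finset.sum_mul]
    _ = ∑ b, z b ^ q :=
        Finset.sum_congr rfl fun b _ => by rw [hrow b, one_mul]

lemma psd_diag_re_nonneg {M : Matrix k k ℂ} (hM : M.PosSemidef) (c : k) : 0 ≤ (M c c).re := by
  have h := hM.dotProduct_mulVec_nonneg (Pi.single c 1)
  have e : star (Pi.single c (1:ℂ)) ⬝ᵥ (M *ᵥ Pi.single c 1) = M c c := by
    simp [Matrix.mulVec_single, dotProduct, Pi.single_apply, apply_ite]
  rw [e] at h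
  exact (Complex.nonneg_iff.mp h).1

lemma sum_diag_re_rpow_le_trf {Q : Matrix k k ℂ} (hQ : Q.PosSemidef) {W : Matrix k k ℂ}
    (hW1 : Wᴴ * W = 1) (hW2 : W * Wᴴ = 1) {q : ℝ} (hq : 1 ≤ q) :
    ∑ c, ((Wᴴ * Q * W) c c).re ^ q ≤ trf q hQ.1 := by
  set V : Matrix k k ℂ := (hQ.1.eigenvectorUnitary : Matrix k k ℂ) with hVdef
  have hV1 : Vᴴ * V = 1 := by
    simpa [Matrix.star_eq_conjTranspose] using
      (Matrix.mem_unitaryGroup_iff').mp hQ.1.eigenvectorUnitary.2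
  have hV2 : V * Vᴴ = 1 := by
    simpa [Matrix.star_eq_conjTranspose] using
      (Matrix.mem_unitaryGroup_iff).mp hQ.1.eigenvectorUnitary.2
  set lam : k → ℝ := hQ.1.eigenvalues with hlam
  set D : Matrix k k ℂ := Matrix.diagonal (fun i => (lam i : ℂ)) with hD
  have hsp : Q = V * D * Vᴴ := by
    have := hQ.1.spectral_theorem
    rw [Unitary.conjStarAlgAut_apply, Matrix.star_eq_conjTranspose] at this
    exact this
  set M : Matrix k k ℂ := Vᴴ * W with hM
  have hMc : Mᴴ = Wᴴ * V := by
    rw [hM, Matrix.conjTranspose_mul, Matrix.conjTranspose_conjTranspose]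
  have hM1 : Mᴴ * M = 1 := by
    rw [hMc, hM, Matrix.mul_assoc, ← Matrix.mul_assoc V, hV2, Matrix.one_mul, hW1]
  have hM2 : M * Mᴴ = 1 := by
    rw [hMc, hM, Matrix.mul_assoc, ← Matrix.mul_assoc W, hW2, Matrix.one_mul, hV1]
  have hconj : Wᴴ * Q * W = Mᴴ * D * M := by
    rw [hsp, hMc, hM]
    simp only [Matrix.mul_assoc]
  have hns : ∀ z : ℂ, star z * z = (Complex.normSq z : ℂ) := fun z => by
    rw [Complex.star_def, ← Complex.normSq_eq_conj_mul_self]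
  have hentry : ∀ c, ((Wᴴ * Q * W) c c).re = ∑ b, Complex.normSq (M b c) * lam b := by
    intro c
    rw [hconj, Matrix.mul_assoc, Matrix.mul_apply]
    have : ∀ b, (Mᴴ) c b * (D * M) b c = ((Complex.normSq (M b c) * lam b : ℝ) : ℂ) := by
      intro b
      rw [Matrix.conjTranspose_apply, hD, Matrix.diagonal_mul]
      have e : star (M b c) * ((lam b : ℂ) * M b c) = (lam b : ℂ) * (star (M b c) * M b c) := by
        ring
      rw [e, hns]
      push_cast
      ring
    rw [Finset.sum_congr rfl fun b _ => this b, ← Complex.ofReal_sum]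
    exact Complex.ofReal_re _
  have hcol : ∀ c, ∑ b, Complex.normSq (M b c) = 1 := by
    intro c
    have h1 : (Mᴴ * M) c c = ((∑ b, Complex.normSq (M b c) : ℝ) : ℂ) := by
      rw [Matrix.mul_apply]
      push_cast
      exact Finset.sum_congr rfl fun b _ => by
        rw [Matrix.conjTranspose_apply, hns]
    rw [hM1, Matrix.one_apply_eq] at h1
    exact_mod_cast h1.symm
  have hrow : ∀ b, ∑ c, Complex.normSq (M b c) = 1 := by
    intro b
    have h1 : (M * Mᴴ) b b = ((∑ c, Complex.normSq (M b c) : ℝ) : ℂ) := by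
      rw [Matrix.mul_apply]
      push_cast
      exact Finset.sum_congr rfl fun c _ => by
        rw [Matrix.conjTranspose_apply, mul_comm, hns]
    rw [hM2, Matrix.one_apply_eq] at h1
    exact_mod_cast h1.symm
  calc ∑ c, ((Wᴴ * Q * W) c c).re ^ q
      = ∑ c, (∑ b, Complex.normSq (M b c) * lam b) ^ q :=
        Finset.sum_congr rfl fun c _ => by rw [hentry c]
    _ ≤ ∑ b, lam b ^ q :=
        key_scalar (fun b c => Complex.normSq (M b c)) lam
          (fun b c => Complex.normSq_nonneg _) hcol hrow
          (fun b => hQ.eigenvalues_nonneg b) hq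
    _ = trf q hQ.1 := rfl

lemma trf_eq_sum_diag {S : Matrix k k ℂ} (hS : S.IsHermitian) (q : ℝ) :
    trf q hS = ∑ c, ((((hS.eigenvectorUnitary : Matrix k k ℂ))ᴴ * S *
      (hS.eigenvectorUnitary : Matrix k k ℂ)) c c).re ^ q := by
  have h := hS.conjStarAlgAut_star_eigenvectorUnitary
  rw [Unitary.conjStarAlgAut_star_apply, Matrix.star_eq_conjTranspose] at h
  rw [h]
  refine Finset.sum_congr rfl fun c _ => ?_
  rw [Matrix.diagonal_apply_eq]
  norm_num [Function.comp]

lemma charpoly_conj_eq {P M Pi : Matrix k k ℂ} (h1 : P * Pi = 1) :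
    (P * M * Pi).charpoly = M.charpoly := by
  have hcm : charmatrix (P * M * Pi) =
      (C : ℂ →+* ℂ[X]).mapMatrix P * charmatrix M * (C : ℂ →+* ℂ[X]).mapMatrix Pi := by
    rw [charmatrix, charmatrix, Matrix.mul_sub, Matrix.sub_mul]
    congr 1
    · have hc : Commute (Matrix.scalar k (X : ℂ[X])) ((C : ℂ →+* ℂ[X]).mapMatrix Pi) :=
        Matrix.scalar_commute (X : ℂ[X]) (fun r => Commute.all _ r) _
      rw [Matrix.mul_assoc, hc.eq, ← Matrix.mul_assoc, ← _root_.map_mul, h1, _root_.map_one,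
        Matrix.one_mul]
    · simp only [_root_.map_mul]
  rw [Matrix.charpoly, Matrix.charpoly, hcm, Matrix.det_mul, Matrix.det_mul]
  have hPP : ((C : ℂ →+* ℂ[X]).mapMatrix P).det * ((C : ℂ →+* ℂ[X]).mapMatrix Pi).det = 1 := by
    rw [← Matrix.det_mul, ← _root_.map_mul, h1, _root_.map_one, Matrix.det_one]
  calc ((C : ℂ →+* ℂ[X]).mapMatrix P).det * (charmatrix M).det *
        ((C : ℂ →+* ℂ[X]).mapMatrix Pi).det
      = (charmatrix M).det * (((C : ℂ →+* ℂ[X]).mapMatrix P).det *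
        ((C : ℂ →+* ℂ[X]).mapMatrix Pi).det) := by ring
    _ = (charmatrix M).det := by rw [hPP, mul_one]

lemma charmatrix_diagonal (d : k → ℂ) :
    charmatrix (Matrix.diagonal d) = Matrix.diagonal (fun i => (X : ℂ[X]) - C (d i)) := by
  ext i j
  by_cases h : i = j
  · subst h
    simp
  · simp [charmatrix_apply_ne _ _ _ h, Matrix.diagonal_apply_ne _ h, Matrix.diagonal_apply_ne d h]

lemma charpoly_diagonal (d : k → ℂ) :
    (Matrix.diagonal d).charpoly = ∏ i, ((X : ℂ[X]) - C (d i)) := by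
  rw [Matrix.charpoly, charmatrix_diagonal, Matrix.det_diagonal]

lemma charpoly_zero_mat : (0 : Matrix k k ℂ).charpoly = X ^ Fintype.card k := by
  have h : (0 : Matrix k k ℂ) = Matrix.diagonal (fun _ => 0) := by simp
  rw [h, charpoly_diagonal]
  simp [Finset.prod_const, Finset.card_univ]

lemma charpoly_mul_comm (A B : Matrix k k ℂ) : (A * B).charpoly = (B * A).charpoly := by
  have hNiN : (Matrix.fromBlocks 1 (-A) 0 1) * (Matrix.fromBlocks 1 A 0 1)
      = (1 : Matrix (k ⊕ k) (k ⊕ k) ℂ) := by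
    simp [Matrix.fromBlocks_multiply, ← Matrix.fromBlocks_one]
  have key : (Matrix.fromBlocks 1 (-A) 0 1) * (Matrix.fromBlocks (A * B) 0 B 0) *
      (Matrix.fromBlocks 1 A 0 1) = Matrix.fromBlocks 0 0 B (B * A) := by
    simp [Matrix.fromBlocks_multiply, Matrix.mul_assoc]
  have h1 : (Matrix.fromBlocks (A * B) 0 B 0).charpoly
      = (Matrix.fromBlocks (0 : Matrix k k ℂ) 0 B (B * A)).charpoly := by
    rw [← key, charpoly_conj_eq hNiN]
  rw [Matrix.charpoly_fromBlocks_zero₁₂, Matrix.charpoly_fromBlocks_zero₁₂] at h1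
  have hz : ((0 : Matrix k k ℂ).charpoly) ≠ 0 := (Matrix.charpoly_monic _).ne_zero
  rw [mul_comm] at h1
  exact mul_left_cancel₀ hz h1

lemma charpoly_isHermitian {A : Matrix k k ℂ} (hA : A.IsHermitian) :
    A.charpoly = ∏ i, ((X : ℂ[X]) - C ((hA.eigenvalues i : ℝ) : ℂ)) := by
  set V : Matrix k k ℂ := (hA.eigenvectorUnitary : Matrix k k ℂ) with hVdef
  have hV1 : Vᴴ * V = 1 := by
    simpa [Matrix.star_eq_conjTranspose] using
      (Matrix.mem_unitaryGroup_iff').mp hA.eigenvectorUnitary.2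
  have hV2 : V * Vᴴ = 1 := by
    simpa [Matrix.star_eq_conjTranspose] using
      (Matrix.mem_unitaryGroup_iff).mp hA.eigenvectorUnitary.2
  have hsp : A = V * Matrix.diagonal (fun i => ((hA.eigenvalues i : ℝ) : ℂ)) * Vᴴ := by
    have := hA.spectral_theorem
    rw [Unitary.conjStarAlgAut_apply, Matrix.star_eq_conjTranspose] at this
    exact this
  conv_lhs => rw [hsp]
  rw [charpoly_conj_eq hV2, charpoly_diagonal]

lemma roots_charpoly {A : Matrix k k ℂ} (hA : A.IsHermitian) :
    A.charpoly.roots = Finset.univ.val.map (fun i => ((hA.eigenvalues i : ℝ) : ℂ)) := by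
  rw [charpoly_isHermitian hA]
  rw [Finset.prod_eq_multiset_prod]
  have h : Multiset.map (fun i => (X : ℂ[X]) - C ((hA.eigenvalues i : ℝ) : ℂ)) Finset.univ.val
      = Multiset.map (fun a => (X : ℂ[X]) - C a)
        (Multiset.map (fun i => ((hA.eigenvalues i : ℝ) : ℂ)) Finset.univ.val) := by
    rw [Multiset.map_map]
    rfl
  rw [h, Polynomial.roots_multiset_prod_X_sub_C]

lemma trf_eq_of_charpoly {l : Type*} [Fintype l] [DecidableEq l]
    {A : Matrix k k ℂ} {B : Matrix l l ℂ} (hA : A.IsHermitian) (hB : B.IsHermitian)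
    {q : ℝ} (hq : q ≠ 0) (d : ℕ)
    (h : A.charpoly = B.charpoly * X ^ d) : trf q hA = trf q hB := by
  have hroots : A.charpoly.roots = B.charpoly.roots + Multiset.replicate d (0 : ℂ) := by
    rw [h, Polynomial.roots_mul (mul_ne_zero (B.charpoly_monic.ne_zero)
      (pow_ne_zero d Polynomial.X_ne_zero)), Polynomial.roots_X_pow,
      Multiset.nsmul_singleton]
  rw [roots_charpoly hA, roots_charpoly hB] at hroots
  have hmul : (Finset.univ.val.map hA.eigenvalues)
      = (Finset.univ.val.map hB.eigenvalues) + Multiset.replicate d (0 : ℝ) := by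
    apply Multiset.map_injective (Complex.ofReal_injective)
    rw [Multiset.map_add, Multiset.map_map, Multiset.map_map, Multiset.map_replicate]
    simpa using hroots
  have e1 : trf q hA = ((Finset.univ.val.map hA.eigenvalues).map (fun x : ℝ => x ^ q)).sum := by
    unfold trf
    rw [Multiset.map_map, Finset.sum_eq_multiset_sum]
    rfl
  have e2 : trf q hB = ((Finset.univ.val.map hB.eigenvalues).map (fun x : ℝ => x ^ q)).sum := by
    unfold trf
    rw [Multiset.map_map, Finset.sum_eq_multiset_sum]
    rfl
  rw [e1, e2, hmul, Multiset.map_add, Multiset.sum_add, Multiset.map_replicate,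
    Multiset.sum_replicate, Real.zero_rpow hq, smul_zero, add_zero]

open scoped MatrixOrder in
lemma trf_superadd {P Q : Matrix k k ℂ}
    (hP : P.PosSemidef) (hQ : Q.PosSemidef) {q : ℝ} (hq : 1 ≤ q) :
    trf q hP.1 + trf q hQ.1 ≤ trf q (hP.add hQ).1 := by
  set sp := CFC.sqrt P with hsp
  set sq := CFC.sqrt Q with hsq
  set Cb : Matrix (k ⊕ k) (k ⊕ k) ℂ := Matrix.fromBlocks sp sq 0 0 with hCbdef
  have hG : (Cbᴴ * Cb).PosSemidef := Matrix.posSemidef_conjTranspose_mul_self Cb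
  have hCbH : Cbᴴ = Matrix.fromBlocks sp 0 sq 0 := by
    rw [hCbdef, Matrix.fromBlocks_conjTranspose, (CFC.sqrt_nonneg P).posSemidef.1, (CFC.sqrt_nonneg Q).posSemidef.1]
    simp [hsp, hsq]
  have hCHC : Cbᴴ * Cb = Matrix.fromBlocks P (sp * sq) (sq * sp) Q := by
    rw [hCbH, hCbdef, Matrix.fromBlocks_multiply]
    simp [hsp, hsq, CFC.sqrt_mul_sqrt_self P hP.nonneg, CFC.sqrt_mul_sqrt_self Q hQ.nonneg]
  have hCCH : Cb * Cbᴴ = Matrix.fromBlocks (P + Q) 0 0 0 := by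
    rw [hCbH, hCbdef, Matrix.fromBlocks_multiply]
    simp [hsp, hsq, CFC.sqrt_mul_sqrt_self P hP.nonneg, CFC.sqrt_mul_sqrt_self Q hQ.nonneg]
  have step1 : trf q hP.1 + trf q hQ.1 ≤ trf q hG.1 := by
    set VP : Matrix k k ℂ := (hP.1.eigenvectorUnitary : Matrix k k ℂ) with hVP
    set VQ : Matrix k k ℂ := (hQ.1.eigenvectorUnitary : Matrix k k ℂ) with hVQ
    have hVP1 : VPᴴ * VP = 1 := by
      simpa [Matrix.star_eq_conjTranspose] using
        (Matrix.mem_unitaryGroup_iff').mp hP.1.eigenvectorUnitary.2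
    have hVP2 : VP * VPᴴ = 1 := by
      simpa [Matrix.star_eq_conjTranspose] using
        (Matrix.mem_unitaryGroup_iff).mp hP.1.eigenvectorUnitary.2
    have hVQ1 : VQᴴ * VQ = 1 := by
      simpa [Matrix.star_eq_conjTranspose] using
        (Matrix.mem_unitaryGroup_iff').mp hQ.1.eigenvectorUnitary.2
    have hVQ2 : VQ * VQᴴ = 1 := by
      simpa [Matrix.star_eq_conjTranspose] using
        (Matrix.mem_unitaryGroup_iff).mp hQ.1.eigenvectorUnitary.2
    set W : Matrix (k ⊕ k) (k ⊕ k) ℂ := Matrix.fromBlocks VP 0 0 VQ with hWdef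
    have hWH : Wᴴ = Matrix.fromBlocks VPᴴ 0 0 VQᴴ := by
      rw [hWdef, Matrix.fromBlocks_conjTranspose]
      simp
    have hW1 : Wᴴ * W = 1 := by
      rw [hWH, hWdef, Matrix.fromBlocks_multiply]
      simp [hVP1, hVQ1, ← Matrix.fromBlocks_one]
    have hW2 : W * Wᴴ = 1 := by
      rw [hWH, hWdef, Matrix.fromBlocks_multiply]
      simp [hVP2, hVQ2, ← Matrix.fromBlocks_one]
    have hdiagP := hP.1.conjStarAlgAut_star_eigenvectorUnitary
    have hdiagQ := hQ.1.conjStarAlgAut_star_eigenvectorUnitary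
    rw [Unitary.conjStarAlgAut_star_apply, Matrix.star_eq_conjTranspose] at hdiagP hdiagQ
    have hblocks : Wᴴ * (Cbᴴ * Cb) * W =
        Matrix.fromBlocks (Matrix.diagonal (RCLike.ofReal ∘ hP.1.eigenvalues))
          (VPᴴ * (sp * sq) * VQ) (VQᴴ * (sq * sp) * VP)
          (Matrix.diagonal (RCLike.ofReal ∘ hQ.1.eigenvalues)) := by
      rw [hCHC, hWH, hWdef, Matrix.fromBlocks_multiply, Matrix.fromBlocks_multiply]
      rw [← hdiagP, ← hdiagQ]
      simp [Matrix.mul_assoc]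
      exact ⟨rfl, rfl⟩
    have hsum : ∑ c, ((Wᴴ * (Cbᴴ * Cb) * W) c c).re ^ q = trf q hP.1 + trf q hQ.1 := by
      rw [hblocks, Fintype.sum_sum_type]
      congr 1
      · exact Finset.sum_congr rfl fun c _ => by
          rw [Matrix.fromBlocks_apply₁₁, Matrix.diagonal_apply_eq]
          norm_num [Function.comp]
      · exact Finset.sum_congr rfl fun c _ => by
          rw [Matrix.fromBlocks_apply₂₂, Matrix.diagonal_apply_eq]
          norm_num [Function.comp]
    rw [← hsum]
    exact sum_diag_re_rpow_le_trf hG hW1 hW2 hq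
  have step2 : trf q hG.1 = trf q (hP.add hQ).1 := by
    apply trf_eq_of_charpoly hG.1 (hP.add hQ).1 (by linarith : q ≠ 0) (Fintype.card k)
    rw [charpoly_mul_comm Cbᴴ Cb, hCCH, Matrix.charpoly_fromBlocks_zero₁₂, charpoly_zero_mat]
  exact step1.trans_eq step2

omit [DecidableEq k] in
lemma posSemidef_sum {ι : Type*} (s : Finset ι) (Q : ι → Matrix k k ℂ)
    (hQ : ∀ i, (Q i).PosSemidef) : (∑ i ∈ s, Q i).PosSemidef := by
  classical
  induction s using Finset.induction_on with
  | empty => simpa using Matrix.PosSemidef.zero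
  | insert _ _ ha ih =>
      rw [Finset.sum_insert ha]
      exact (hQ _).add ih

lemma trf_sum_ge {ι : Type*} (s : Finset ι) (Q : ι → Matrix k k ℂ)
    (hQ : ∀ i, (Q i).PosSemidef) {q : ℝ} (hq : 1 ≤ q) :
    ∑ i ∈ s, trf q (hQ i).1 ≤ trf q (posSemidef_sum s Q hQ).1 := by
  classical
  induction s using Finset.induction_on with
  | empty => simpa using trf_nonneg (posSemidef_sum ∅ Q hQ)
  | @insert a s ha ih =>
      rw [Finset.sum_insert ha]
      have h2 := trf_superadd (hQ a) (posSemidef_sum s Q hQ) hq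
      have h3 : trf q ((hQ a).add (posSemidef_sum s Q hQ)).1
          = trf q (posSemidef_sum (insert a s) Q hQ).1 :=
        trf_congr (Finset.sum_insert ha).symm _ _ q
      linarith

lemma trf_sum_le_card {ι : Type*} [Fintype ι] (Q : ι → Matrix k k ℂ)
    (hQ : ∀ i, (Q i).PosSemidef) {q : ℝ} (hq : 1 ≤ q) :
    trf q (posSemidef_sum Finset.univ Q hQ).1
      ≤ (Fintype.card ι : ℝ) ^ (q - 1) * ∑ i, trf q (hQ i).1 := by
  have hS : (∑ i, Q i).PosSemidef := posSemidef_sum Finset.univ Q hQ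
  set W : Matrix k k ℂ := (hS.1.eigenvectorUnitary : Matrix k k ℂ) with hWdef
  have hW1 : Wᴴ * W = 1 := by
    simpa [Matrix.star_eq_conjTranspose] using
      (Matrix.mem_unitaryGroup_iff').mp hS.1.eigenvectorUnitary.2
  have hW2 : W * Wᴴ = 1 := by
    simpa [Matrix.star_eq_conjTranspose] using
      (Matrix.mem_unitaryGroup_iff).mp hS.1.eigenvectorUnitary.2
  have hdg : trf q hS.1 = ∑ c, ((Wᴴ * (∑ i, Q i) * W) c c).re ^ q := trf_eq_sum_diag hS.1 q
  have hsplitM : Wᴴ * (∑ i, Q i) * W = ∑ i, Wᴴ * Q i * W := by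
    rw [Finset.mul_sum, Finset.sum_mul]
  have entry : ∀ c, ((Wᴴ * (∑ i, Q i) * W) c c).re = ∑ i, ((Wᴴ * Q i * W) c c).re := by
    intro c
    rw [hsplitM, Matrix.sum_apply, Complex.re_sum]
  have hmain : trf q (posSemidef_sum Finset.univ Q hQ).1 = trf q hS.1 := rfl
  rw [hmain]
  calc trf q hS.1 = ∑ c, (∑ i, ((Wᴴ * Q i * W) c c).re) ^ q := by
        rw [hdg]
        exact Finset.sum_congr rfl fun c _ => by rw [entry c]
    _ ≤ ∑ c, ((Fintype.card ι : ℝ) ^ (q - 1) * ∑ i, ((Wᴴ * Q i * W) c c).re ^ q) :=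
        Finset.sum_le_sum fun c _ => rpow_sum_le_card_mul _
          (fun i => psd_diag_re_nonneg ((hQ i).conjTranspose_mul_mul_same W) c) hq
    _ = (Fintype.card ι : ℝ) ^ (q - 1) * ∑ i, ∑ c, ((Wᴴ * Q i * W) c c).re ^ q := by
        rw [← Finset.mul_sum, Finset.sum_comm]
    _ ≤ (Fintype.card ι : ℝ) ^ (q - 1) * ∑ i, trf q (hQ i).1 := by
        apply mul_le_mul_of_nonneg_left _ (Real.rpow_nonneg (Nat.cast_nonneg _) _)
        exact Finset.sum_le_sum fun i _ => sum_diag_re_rpow_le_trf (hQ i) hW1 hW2 hq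

lemma sum_pairs {M : Type*} [AddCommGroup M] {n : ℕ} (h : Fin n → Fin n → M)
    (hdiag : ∀ i, h i i = 0) :
    ∑ i, ∑ j ∈ Finset.Ioi i, (h i j + h j i) = ∑ i, ∑ j, h i j := by
  classical
  have hIoi : ∀ i : Fin n, Finset.Ioi i = Finset.univ.filter (fun j => i < j) := by
    intro i; ext j; simp
  have e1 : ∀ (H : Fin n → Fin n → M), ∑ i, ∑ j ∈ Finset.Ioi i, H i j
      = ∑ x ∈ Finset.univ.filter (fun x : Fin n × Fin n => x.1 < x.2), H x.1 x.2 := by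
    intro H
    rw [Finset.sum_filter, Fintype.sum_prod_type]
    refine Finset.sum_congr rfl fun i _ => ?_
    rw [hIoi i, Finset.sum_filter]
  rw [e1, Finset.sum_add_distrib]
  have e2 : ∑ x ∈ Finset.univ.filter (fun x : Fin n × Fin n => x.1 < x.2), h x.2 x.1
      = ∑ x ∈ Finset.univ.filter (fun x : Fin n × Fin n => x.2 < x.1), h x.1 x.2 := by
    refine Finset.sum_equiv (Equiv.prodComm (Fin n) (Fin n)) (fun x => ?_) (fun x _ => rfl)
    simp
  have e3 : ∑ i, ∑ j, h i j = ∑ x : Fin n × Fin n, h x.1 x.2 :=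
    (Fintype.sum_prod_type (f := fun x : Fin n × Fin n => h x.1 x.2)).symm
  rw [e2, e3,
    ← Finset.sum_filter_add_sum_filter_not Finset.univ (fun x : Fin n × Fin n => x.1 < x.2)
      (fun x => h x.1 x.2)]
  congr 1
  rw [← Finset.sum_filter_add_sum_filter_not
      (Finset.univ.filter (fun x : Fin n × Fin n => ¬x.1 < x.2)) (fun x => x.2 < x.1)
      (fun x => h x.1 x.2), Finset.filter_filter, Finset.filter_filter]
  have hd : ∑ x ∈ Finset.univ.filter (fun x : Fin n × Fin n => ¬x.1 < x.2 ∧ ¬x.2 < x.1),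
      h x.1 x.2 = 0 := by
    apply Finset.sum_eq_zero
    intro x hx
    simp only [Finset.mem_filter, Finset.mem_univ, true_and] at hx
    have hxx : x.1 = x.2 := le_antisymm (not_lt.mp hx.2) (not_lt.mp hx.1)
    rw [← hxx, hdiag]
  rw [hd, add_zero]
  apply Finset.sum_congr _ (fun _ _ => rfl)
  ext x
  simp only [Finset.mem_filter, Finset.mem_univ, true_and]
  exact ⟨fun hx => ⟨lt_asymm hx, hx⟩, fun hx => hx.2⟩

lemma schatten_pow {m : Type*} [Fintype m] [DecidableEq m] (X : Matrix m m ℂ) {p : ℝ}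
    (hp : 0 < p) : schattenNorm p X ^ p
      = trf (p / 2) (Matrix.posSemidef_conjTranspose_mul_self X).1 := by
  have hs : 0 ≤ ∑ i, ((Matrix.posSemidef_conjTranspose_mul_self X).1.eigenvalues i ^ (p / 2)) :=
    Finset.sum_nonneg fun i _ =>
      Real.rpow_nonneg ((Matrix.posSemidef_conjTranspose_mul_self X).eigenvalues_nonneg i) _
  rw [schattenNorm, ← Real.rpow_mul hs, one_div, inv_mul_cancel₀ hp.ne', Real.rpow_one]
  rfl

end HKProof

open HKProof Matrix Finset in
theorem hirzallah_kittaneh_p_ge_two {m : Type*} [Fintype m] [DecidableEq m] (n : ℕ)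
    (A : Fin n → Matrix m m ℂ)
    (p : ℝ) (hp : 2 ≤ p) :
    schattenNorm p (∑ i, A i) ^ p +
        ∑ i, ∑ j ∈ Finset.Ioi i, schattenNorm p (A i - A j) ^ p ≤
      (n : ℝ) ^ (p - 1) * ∑ i, schattenNorm p (A i) ^ p := by
  classical
  have hp0 : (0:ℝ) < p := by linarith
  set q : ℝ := p / 2 with hqdef
  have hq1 : (1:ℝ) ≤ q := by rw [hqdef]; linarith
  set B0 : Matrix m m ℂ := ∑ i, A i with hB0
  have hpsd0 : (B0ᴴ * B0).PosSemidef := Matrix.posSemidef_conjTranspose_mul_self _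
  set D : (Σ _ : Fin n, Fin n) → Matrix m m ℂ :=
    fun σ => (A σ.1 - A σ.2)ᴴ * (A σ.1 - A σ.2) with hD
  have hpsdD : ∀ σ, (D σ).PosSemidef := fun σ => Matrix.posSemidef_conjTranspose_mul_self _
  set Sig : Finset (Σ _ : Fin n, Fin n) := Finset.univ.sigma (fun i => Finset.Ioi i) with hSig
  set T : Fin n × Fin n → Matrix m m ℂ := fun x => (A x.2)ᴴ * A x.2 with hT
  have hpsdT : ∀ x, (T x).PosSemidef := fun x => Matrix.posSemidef_conjTranspose_mul_self _
  -- rewrite LHS pieces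
  have hL1 : schattenNorm p B0 ^ p = trf q hpsd0.1 := schatten_pow _ hp0
  have hL2 : ∑ i, ∑ j ∈ Finset.Ioi i, schattenNorm p (A i - A j) ^ p
      = ∑ σ ∈ Sig, trf q (hpsdD σ).1 := by
    rw [hSig, Finset.sum_sigma]
    exact Finset.sum_congr rfl fun i _ => Finset.sum_congr rfl fun j _ =>
      schatten_pow _ hp0
  have hR : ∑ i, schattenNorm p (A i) ^ p
      = ∑ i, trf q (Matrix.posSemidef_conjTranspose_mul_self (A i)).1 :=
    Finset.sum_congr rfl fun i _ => schatten_pow _ hp0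
  -- superadditivity chain
  have hstep1 : ∑ σ ∈ Sig, trf q (hpsdD σ).1 ≤ trf q (posSemidef_sum Sig D hpsdD).1 :=
    trf_sum_ge Sig D hpsdD hq1
  have hstep2 : trf q hpsd0.1 + trf q (posSemidef_sum Sig D hpsdD).1
      ≤ trf q (hpsd0.add (posSemidef_sum Sig D hpsdD)).1 :=
    trf_superadd hpsd0 (posSemidef_sum Sig D hpsdD) hq1
  -- the algebraic identity
  have hID : B0ᴴ * B0 + ∑ σ ∈ Sig, D σ = ∑ x : Fin n × Fin n, T x := by
    have expand : ∀ i j : Fin n, (A i - A j)ᴴ * (A i - A j)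
        = ((A j)ᴴ * A j - (A i)ᴴ * A j) + ((A i)ᴴ * A i - (A j)ᴴ * A i) := by
      intro i j
      rw [Matrix.conjTranspose_sub, Matrix.sub_mul, Matrix.mul_sub, Matrix.mul_sub]
      abel
    have hsp := sum_pairs (fun i j => (A j)ᴴ * A j - (A i)ᴴ * A j) (fun i => sub_self _)
    have hE1 : B0ᴴ * B0 = ∑ i, ∑ j, (A i)ᴴ * A j := by
      rw [hB0, Matrix.conjTranspose_sum, Finset.sum_mul_sum]
    have hE2 : ∑ σ ∈ Sig, D σ
        = ∑ i, ∑ j ∈ Finset.Ioi i, (((A j)ᴴ * A j - (A i)ᴴ * A j)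
            + ((A i)ᴴ * A i - (A j)ᴴ * A i)) := by
      rw [hSig, Finset.sum_sigma]
      exact Finset.sum_congr rfl fun i _ => Finset.sum_congr rfl fun j _ => expand i j
    rw [hE1, hE2, hsp]
    rw [← Finset.sum_add_distrib]
    have : ∀ i : Fin n, (∑ j, (A i)ᴴ * A j) + ∑ j, ((A j)ᴴ * A j - (A i)ᴴ * A j)
        = ∑ j, (A j)ᴴ * A j := by
      intro i
      rw [← Finset.sum_add_distrib]
      exact Finset.sum_congr rfl fun j _ => by abel
    rw [Finset.sum_congr rfl fun i _ => this i]
    exact (Fintype.sum_prod_type (f := fun x : Fin n × Fin n => (A x.2)ᴴ * A x.2)).symm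
  have hstep3 : trf q (hpsd0.add (posSemidef_sum Sig D hpsdD)).1
      = trf q (posSemidef_sum Finset.univ T hpsdT).1 :=
    trf_congr hID _ _ q
  have hstep4 : trf q (posSemidef_sum Finset.univ T hpsdT).1
      ≤ (Fintype.card (Fin n × Fin n) : ℝ) ^ (q - 1) * ∑ x, trf q (hpsdT x).1 :=
    trf_sum_le_card T hpsdT hq1
  -- sum over product
  have hsumT : ∑ x : Fin n × Fin n, trf q (hpsdT x).1
      = (n : ℝ) * ∑ i, trf q (Matrix.posSemidef_conjTranspose_mul_self (A i)).1 := by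
    rw [Fintype.sum_prod_type (f := fun x : Fin n × Fin n => trf q (hpsdT x).1)]
    have e : ∀ x : Fin n, ∑ y, trf q (hpsdT (x, y)).1
        = ∑ i, trf q (Matrix.posSemidef_conjTranspose_mul_self (A i)).1 :=
      fun x => Finset.sum_congr rfl fun y _ => rfl
    rw [Finset.sum_congr rfl fun x _ => e x, Finset.sum_const, Finset.card_univ,
      Fintype.card_fin, nsmul_eq_mul]
  -- final numeric bound
  set R : ℝ := ∑ i, trf q (Matrix.posSemidef_conjTranspose_mul_self (A i)).1 with hRdef
  have hRnn : 0 ≤ R := Finset.sum_nonneg fun i _ =>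
    trf_nonneg (Matrix.posSemidef_conjTranspose_mul_self (A i))
  have hnum : (Fintype.card (Fin n × Fin n) : ℝ) ^ (q - 1) * ((n : ℝ) * R)
      ≤ (n : ℝ) ^ (p - 1) * R := by
    rcases Nat.eq_zero_or_pos n with h0 | h0
    · subst h0
      simp [Real.zero_rpow (by linarith : p - 1 ≠ 0)]
    · have hn : (0:ℝ) < n := by exact_mod_cast h0
      have hcard : (Fintype.card (Fin n × Fin n) : ℝ) = (n : ℝ) * n := by
        rw [Fintype.card_prod, Fintype.card_fin]
        push_cast
        ring
      rw [hcard, Real.mul_rpow hn.le hn.le]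
      have hexp : (n:ℝ) ^ (q - 1) * (n:ℝ) ^ (q - 1) * (n:ℝ) = (n:ℝ) ^ (p - 1) := by
        rw [← Real.rpow_add hn, ← Real.rpow_add_one hn.ne']
        congr 1
        rw [hqdef]
        ring
      apply le_of_eq
      calc ((n:ℝ) ^ (q - 1) * (n:ℝ) ^ (q - 1)) * ((n : ℝ) * R)
          = ((n:ℝ) ^ (q - 1) * (n:ℝ) ^ (q - 1) * (n:ℝ)) * R := by ring
        _ = (n : ℝ) ^ (p - 1) * R := by rw [hexp]
  -- assemble
  rw [hL1, hL2, hR]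
  have chain : trf q hpsd0.1 + ∑ σ ∈ Sig, trf q (hpsdD σ).1
      ≤ (Fintype.card (Fin n × Fin n) : ℝ) ^ (q - 1) * ((n : ℝ) * R) := by
    have h4 := hstep4
    rw [hsumT] at h4
    calc trf q hpsd0.1 + ∑ σ ∈ Sig, trf q (hpsdD σ).1
        ≤ trf q hpsd0.1 + trf q (posSemidef_sum Sig D hpsdD).1 := by linarith
      _ ≤ trf q (hpsd0.add (posSemidef_sum Sig D hpsdD)).1 := hstep2
      _ = trf q (posSemidef_sum Finset.univ T hpsdT).1 := hstep3
      _ ≤ (Fintype.card (Fin n × Fin n) : ℝ) ^ (q - 1) * ((n : ℝ) * R) := h4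
  linarith
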